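/- A-strategies σ, inst : S → E on an A-game E are in bijective correspondence with (ordinary) strategies σ' : S → expn(E) on the expansion, via θ(σ, inst)(s) = (σ(s), ε_s) where ε_s is the local instantiation; conversely every strategy σ' : S → expn(E) arises as θ(red ∘ σ', Inst ∘ σ'). -/

import Mathlib

/-- The order and consistency data of an event structure. -/
structure PreES (E : Type) where
  le : E → E → Prop
  con : Set E → Prop

namespace PreES

variable {E F : Type}

/-- A configuration: every finite subset is consistent, and it is down-closed. -/
def Config (P : PreES E) (x : Set E) : Prop :=
  (∀ X : Set E, X ⊆ x → X.Finite → P.con X) ∧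
  (∀ e e' : E, P.le e' e → e ∈ x → e' ∈ x)

/-- `e` is enabled at the configuration `x`: `x ∪ {e}` is again a configuration. -/
def Enabled (P : PreES E) (x : Set E) (e : E) : Prop :=
  e ∉ x ∧ P.Config (insert e x)

/-- Immediate causal dependency `e → e'` : `e ≠ e'`, `e ≤ e'` and nothing strictly between. -/
def Imm (P : PreES E) (e e' : E) : Prop :=
  e ≠ e' ∧ P.le e e' ∧ ∀ d, P.le e d → P.le d e' → d = e ∨ d = e'

/-- A total map of event structures: configurations map to configurations,
injectively on each configuration. -/
def IsMap (P : PreES E) (Q : PreES F) (f : E → F) : Prop :=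
  (∀ x : Set E, P.Config x → Q.Config (f '' x)) ∧
  (∀ x : Set E, P.Config x → ∀ e₁ ∈ x, ∀ e₂ ∈ x, f e₁ = f e₂ → e₁ = e₂)

end PreES

/-- An event structure. -/
structure ES (E : Type) extends PreES E where
  le_refl : ∀ e, le e e
  le_trans : ∀ a b c, le a b → le b c → le a c
  le_antisymm : ∀ a b, le a b → le b a → a = b
  causes_finite : ∀ e, {e' | le e' e}.Finite
  con_singleton : ∀ e, con {e}
  con_subset : ∀ X Y : Set E, Y ⊆ X → con X → con Y
  con_extend : ∀ (X : Set E) (e e' : E), con X → le e e' → e' ∈ X → con (insert e X)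

/-- No-overlap: events carrying the same variable are never concurrent. -/
def NoOverlap {E V : Type} (P : PreES E) (var : E → V) : Prop :=
  ∀ e e', var e = var e' →
    ¬(P.con {e, e'} ∧ ¬ P.le e e' ∧ ¬ P.le e' e)

/-- Race-freeness: enabled events of opposite polarities can occur jointly.
`true` is the polarity `+`, `false` is `−`. -/
def RaceFree {E : Type} (P : PreES E) (pol : E → Bool) : Prop :=
  ∀ x : Set E, P.Config x → ∀ e e', P.Enabled x e → P.Enabled x e' →
    pol e = true → pol e' = false → e ≠ e' → P.Config (insert e (insert e' x))

/-- An (ordinary) strategy: a total, polarity preserving map of event structures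
which is receptive and innocent. -/
def IsStrategy {SE E : Type} (S : PreES SE) (G : PreES E)
    (polS : SE → Bool) (polG : E → Bool) (σ : SE → E) : Prop :=
  PreES.IsMap S G σ ∧
  (∀ s, polG (σ s) = polS s) ∧
  (∀ x : Set SE, S.Config x → ∀ e, polG e = false → G.Enabled (σ '' x) e →
    ∃! s, S.Enabled x s ∧ σ s = e) ∧
  (∀ s s', S.Imm s s' → (polS s' = false ∨ polS s = true) → G.Imm (σ s) (σ s'))

/-- An `𝓐`-strategy on an `𝓐`-game: a total, polarity preserving map with an
instantiation function of matching sorts, receptive (for every element of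
matching sort) and innocent. -/
def IsAStrategy {SE E A V Srt : Type} (S : PreES SE) (G : PreES E)
    (polS : SE → Bool) (polG : E → Bool) (var : E → V)
    (sortA : A → Srt) (sortV : V → Srt)
    (σ : SE → E) (inst : SE → A) : Prop :=
  PreES.IsMap S G σ ∧
  (∀ s, polG (σ s) = polS s) ∧
  (∀ s, sortA (inst s) = sortV (var (σ s))) ∧
  (∀ x : Set SE, S.Config x → ∀ e, polG e = false → G.Enabled (σ '' x) e →
    ∀ a, sortA a = sortV (var e) →
      ∃! s, S.Enabled x s ∧ σ s = e ∧ inst s = a) ∧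
  (∀ s s', S.Imm s s' → (polS s' = false ∨ polS s = true) → G.Imm (σ s) (σ s'))

/-- An event of the `𝓐`-expansion: an event `e` together with a sort-respecting
instantiation of its down-closure `[e]` (encoded as an `Option`-valued function
whose domain is exactly `[e]`). -/
structure ExEvent {E A V Srt : Type} (P : PreES E) (var : E → V)
    (sortA : A → Srt) (sortV : V → Srt) where
  ev : E
  inst : E → Option A
  dom : ∀ e', (inst e').isSome ↔ P.le e' ev
  srt : ∀ e' a, inst e' = some a → sortA a = sortV (var e')

/-- The `𝓐`-expansion of a game, as order and consistency data. -/
def expn {E A V Srt : Type} (P : PreES E) (var : E → V)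
    (sortA : A → Srt) (sortV : V → Srt) : PreES (ExEvent P var sortA sortV) where
  le p q := P.le p.ev q.ev ∧ ∀ e', P.le e' p.ev → q.inst e' = p.inst e'
  con X := P.con (ExEvent.ev '' X) ∧ ∀ p ∈ X, ∀ q ∈ X, p.ev = q.ev → p = q

/-- The projection `red : expn(E) → E`. -/
def red {E A V Srt : Type} {P : PreES E} {var : E → V}
    {sortA : A → Srt} {sortV : V → Srt} (p : ExEvent P var sortA sortV) : E := p.ev

/-- The instantiation `Inst(e,ε) = ε(e)` (needs reflexivity of the order). -/
def ExEvent.Inst {E A V Srt : Type} {P : PreES E} {var : E → V}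
    {sortA : A → Srt} {sortV : V → Srt} (href : ∀ e, P.le e e)
    (p : ExEvent P var sortA sortV) : A :=
  (p.inst p.ev).get ((p.dom p.ev).mpr (href p.ev))

/-- Parallel composition of the order/consistency data of two event structures. -/
def parPre {E F : Type} (P : PreES E) (Q : PreES F) : PreES (E ⊕ F) where
  le x y :=
    match x, y with
    | .inl a, .inl b => P.le a b
    | .inr a, .inr b => Q.le a b
    | _, _ => False
  con X := P.con {a | Sum.inl a ∈ X} ∧ Q.con {b | Sum.inr b ∈ X}

/-- Restriction of the data of an event structure to a subset of events. -/
def subPre {E : Type} (P : PreES E) (p : E → Prop) : PreES {e : E // p e} where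
  le a b := P.le a.1 b.1
  con X := P.con (Subtype.val '' X)


namespace AExp

open PreES Set

attribute [local instance] Classical.propDecidable

variable {SE E A V Srt : Type} {G : ES E} {var : E → V} {sortA : A → Srt} {sortV : V → Srt}

/-- Extensionality for expansion events. -/
theorem exEvent_ext' {p q : ExEvent G.toPreES var sortA sortV}
    (hev : p.ev = q.ev) (hinst : ∀ e', G.le e' p.ev → p.inst e' = q.inst e') : p = q := by
  cases p with | mk pe pi pd ps =>
  cases q with | mk qe qi qd qs =>
  simp only at hev hinst
  subst hev
  have hpi : pi = qi := by
    funext e'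
    by_cases h : G.le e' pe
    · exact hinst e' h
    · have h1 : pi e' = none := by
        cases hpi : pi e' with
        | none => rfl
        | some a => exact absurd ((pd e').mp (by simp [hpi])) h
      have h2 : qi e' = none := by
        cases hqi : qi e' with
        | none => rfl
        | some a => exact absurd ((qd e').mp (by simp [hqi])) h
      rw [h1, h2]
  subst hpi
  rfl

/-- Restriction of an expansion event to a cause. -/
noncomputable def restrict (p : ExEvent G.toPreES var sortA sortV) (e : E) (h : G.le e p.ev) :
    ExEvent G.toPreES var sortA sortV where
  ev := e
  inst := fun e' => if G.le e' e then p.inst e' else none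
  dom := fun e' => by
    by_cases h' : G.le e' e
    · simp [h', (p.dom e').mpr (G.le_trans _ _ _ h' h)]
    · simp [h']
  srt := fun e' a ha => by
    by_cases h' : G.le e' e
    · exact p.srt e' a (by simpa [h'] using ha)
    · simp [h'] at ha

@[simp] theorem restrict_ev (p : ExEvent G.toPreES var sortA sortV) (e : E) (h : G.le e p.ev) :
    (restrict p e h).ev = e := rfl

theorem restrict_inst (p : ExEvent G.toPreES var sortA sortV) (e : E) (h : G.le e p.ev)
    {e'} (h' : G.le e' e) : (restrict p e h).inst e' = p.inst e' := if_pos h'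

theorem restrict_le (p : ExEvent G.toPreES var sortA sortV) (e : E) (h : G.le e p.ev) :
    (expn G.toPreES var sortA sortV).le (restrict p e h) p :=
  ⟨h, fun e' he' => (restrict_inst p e h he').symm⟩

/-- In the expansion, comparable events with equal underlying events are equal. -/
theorem le_ev_eq {p q : ExEvent G.toPreES var sortA sortV}
    (h : (expn G.toPreES var sortA sortV).le p q) (hev : p.ev = q.ev) : p = q :=
  exEvent_ext' hev (fun e' he' => (h.2 e' he').symm)

/-- In a configuration of the expansion, events with equal underlying events coincide. -/
theorem config_pair {y : Set (ExEvent G.toPreES var sortA sortV)}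
    (hy : (expn G.toPreES var sortA sortV).Config y)
    {p q} (hp : p ∈ y) (hq : q ∈ y) (hev : p.ev = q.ev) : p = q :=
  (hy.1 {p, q} (by rintro r (rfl | rfl) <;> assumption)
    ((Set.finite_singleton q).insert p)).2 p (by simp) q (by simp) hev

/-- Coherence of the instantiations inside a configuration of the expansion. -/
theorem config_coh {y : Set (ExEvent G.toPreES var sortA sortV)}
    (hy : (expn G.toPreES var sortA sortV).Config y)
    {p q} (hp : p ∈ y) (hq : q ∈ y) {e'} (hep : G.le e' p.ev) (heq : G.le e' q.ev) :
    p.inst e' = q.inst e' := by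
  have h1 : restrict p e' hep ∈ y := hy.2 p _ (restrict_le p e' hep) hp
  have h2 : restrict q e' heq ∈ y := hy.2 q _ (restrict_le q e' heq) hq
  have h3 : restrict p e' hep = restrict q e' heq := config_pair hy h1 h2 rfl
  have h4 := congrFun (congrArg ExEvent.inst h3) e'
  rwa [restrict_inst p e' hep (G.le_refl e'), restrict_inst q e' heq (G.le_refl e')] at h4

/-- The image under `ev` of a configuration of the expansion is a configuration. -/
theorem config_ev_image {y : Set (ExEvent G.toPreES var sortA sortV)}
    (hy : (expn G.toPreES var sortA sortV).Config y) :
    G.toPreES.Config (ExEvent.ev '' y) := by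
  constructor
  · intro X hX hXfin
    set X₀ : Set (ExEvent G.toPreES var sortA sortV) := y ∩ ExEvent.ev ⁻¹' X with hX₀
    have himg : ExEvent.ev '' X₀ = X := by
      apply Set.Subset.antisymm
      · rintro _ ⟨p, ⟨hp, hpX⟩, rfl⟩; exact hpX
      · intro e he
        obtain ⟨p, hp, rfl⟩ := hX he
        exact ⟨p, ⟨hp, he⟩, rfl⟩
    have hinj : Set.InjOn ExEvent.ev X₀ := fun p hp q hq h => config_pair hy hp.1 hq.1 h
    have hfin : X₀.Finite := Set.Finite.of_finite_image (himg ▸ hXfin) hinj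
    exact himg ▸ (hy.1 X₀ Set.inter_subset_left hfin).1
  · rintro _ e' hle ⟨p, hp, rfl⟩
    exact ⟨restrict p e' hle, hy.2 p _ (restrict_le p e' hle) hp, rfl⟩

/-- A criterion for being a configuration of the expansion. -/
theorem config_of {y : Set (ExEvent G.toPreES var sortA sortV)}
    (h1 : G.toPreES.Config (ExEvent.ev '' y))
    (h2 : ∀ p ∈ y, ∀ q ∈ y, p.ev = q.ev → p = q)
    (h3 : ∀ p q, (expn G.toPreES var sortA sortV).le q p → p ∈ y → q ∈ y) :
    (expn G.toPreES var sortA sortV).Config y :=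
  ⟨fun X hX hXfin => ⟨h1.1 _ (Set.image_mono hX) (hXfin.image _),
      fun p hp q hq => h2 p (hX hp) q (hX hq)⟩, h3⟩

/-- The down-closure of an event is consistent. -/
theorem downcl_con {F : Type} (S : ES F) (s : F) : S.con {e' | S.le e' s} := by
  have key : ∀ X : Set F, X.Finite → X ⊆ {e' | S.le e' s} → S.con (insert s X) := by
    intro X hfin
    refine Set.Finite.induction_on
      (motive := fun X _ => X ⊆ {e' | S.le e' s} → S.con (insert s X)) X hfin ?_ ?_
    · intro _; simpa using S.con_singleton s
    · intro a X _ _ ih hsub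
      rw [Set.insert_comm]
      exact S.con_extend _ a s (ih (fun e he => hsub (Set.mem_insert_of_mem a he)))
        (hsub (Set.mem_insert a X)) (Set.mem_insert s X)
  have h := key {e' | S.le e' s} (S.causes_finite s) subset_rfl
  exact S.con_subset _ _ (Set.subset_insert s _) h

/-- The down-closure of an event is a configuration. -/
theorem downcl_config {F : Type} (S : ES F) (s : F) : S.toPreES.Config {e' | S.le e' s} :=
  ⟨fun X hX _ => S.con_subset _ X hX (downcl_con S s),
   fun e e' h he => S.le_trans _ _ _ h he⟩

section Theta

variable (SS : ES SE) (σ : SE → E) (inst : SE → A)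

/-- Every cause of `σ s` has a unique pre-image below `s`. -/
theorem local_wit (hmap : PreES.IsMap SS.toPreES G.toPreES σ) (s : SE) {e' : E}
    (h : G.le e' (σ s)) : ∃! s', SS.le s' s ∧ σ s' = e' := by
  have hc := downcl_config SS s
  have himg := hmap.1 _ hc
  have hmem : e' ∈ σ '' {t | SS.le t s} := himg.2 (σ s) e' h ⟨s, SS.le_refl s, rfl⟩
  obtain ⟨s', hs', heq⟩ := hmem
  refine ⟨s', ⟨hs', heq⟩, ?_⟩
  rintro s'' ⟨hs'', heq'⟩
  exact hmap.2 _ hc s'' hs'' s' hs' (heq'.trans heq.symm)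

/-- The strategy on the expansion induced by an `𝓐`-strategy. -/
noncomputable def theta (hmap : PreES.IsMap SS.toPreES G.toPreES σ)
    (hsort : ∀ s, sortA (inst s) = sortV (var (σ s))) (s : SE) :
    ExEvent G.toPreES var sortA sortV where
  ev := σ s
  inst := fun e' =>
    if h : G.le e' (σ s) then
      some (inst (local_wit SS σ hmap s h).exists.choose)
    else none
  dom := fun e' => by
    by_cases h : G.le e' (σ s) <;> simp [h]
  srt := fun e' a ha => by
    by_cases h : G.le e' (σ s)
    · simp only [dif_pos h, Option.some_inj] at ha
      obtain ⟨hle, heq⟩ := (local_wit SS σ hmap s h).exists.choose_spec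
      rw [← ha, hsort, heq]
    · simp only [dif_neg h] at ha
      exact nomatch ha

@[simp] theorem theta_ev (hmap : PreES.IsMap SS.toPreES G.toPreES σ)
    (hsort : ∀ s, sortA (inst s) = sortV (var (σ s))) (s : SE) : (theta SS σ inst hmap hsort s).ev = σ s := rfl

theorem theta_comp_ev (hmap : PreES.IsMap SS.toPreES G.toPreES σ)
    (hsort : ∀ s, sortA (inst s) = sortV (var (σ s))) :
    (fun s => (theta SS σ inst hmap hsort s).ev) = σ := rfl

theorem theta_inst (hmap : PreES.IsMap SS.toPreES G.toPreES σ)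
    (hsort : ∀ s, sortA (inst s) = sortV (var (σ s))) (s : SE) {e'} (h : G.le e' (σ s)) {s'} (hs' : SS.le s' s) (he : σ s' = e') :
    (theta SS σ inst hmap hsort s).inst e' = some (inst s') := by
  simp only [theta, dif_pos h, Option.some_inj]
  congr 1
  have hw := (local_wit SS σ hmap s h).exists.choose_spec
  exact (local_wit SS σ hmap s h).unique hw ⟨hs', he⟩

theorem theta_Inst (hmap : PreES.IsMap SS.toPreES G.toPreES σ)
    (hsort : ∀ s, sortA (inst s) = sortV (var (σ s))) (s : SE) : (theta SS σ inst hmap hsort s).Inst G.le_refl = inst s := by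
  have h := theta_inst SS σ inst hmap hsort s (G.le_refl (σ s)) (SS.le_refl s) rfl
  simp [ExEvent.Inst, h]

/-- Anything below `theta s` in the expansion is of the form `theta s'`. -/
theorem theta_downcl (hmap : PreES.IsMap SS.toPreES G.toPreES σ)
    (hsort : ∀ s, sortA (inst s) = sortV (var (σ s))) (s : SE) (r : ExEvent G.toPreES var sortA sortV)
    (hr : (expn G.toPreES var sortA sortV).le r (theta SS σ inst hmap hsort s)) :
    ∃ s', SS.le s' s ∧ σ s' = r.ev ∧ r = theta SS σ inst hmap hsort s' := by
  obtain ⟨hle, hinst⟩ := hr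
  have hle' : G.le r.ev (σ s) := hle
  obtain ⟨s', ⟨hs'le, hs'ev⟩⟩ := (local_wit SS σ hmap s hle').exists
  refine ⟨s', hs'le, hs'ev, ?_⟩
  apply exEvent_ext' hs'ev.symm
  intro e'' he''
  have hws' : G.le e'' (σ s') := by rw [hs'ev]; exact he''
  have he''s : G.le e'' (σ s) := G.le_trans _ _ _ he'' hle'
  obtain ⟨u, ⟨hule, huev⟩⟩ := (local_wit SS σ hmap s' hws').exists
  have h2 : (theta SS σ inst hmap hsort s').inst e'' = some (inst u) :=
    theta_inst SS σ inst hmap hsort s' hws' hule huev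
  have h1 : r.inst e'' = some (inst u) := by
    rw [← hinst e'' he'']
    exact theta_inst SS σ inst hmap hsort s he''s (SS.le_trans _ _ _ hule hs'le) huev
  rw [h1, h2]

theorem inst_ev_eq (p : ExEvent G.toPreES var sortA sortV) :
    p.inst p.ev = some (p.Inst G.le_refl) := (Option.some_get _).symm

end Theta

section Extend

variable {y : Set (ExEvent G.toPreES var sortA sortV)} {e : E} {a : A}

theorem extend_wit (hcfg : G.toPreES.Config (insert e (ExEvent.ev '' y)))
    {e'} (h : G.le e' e) (hne : e' ≠ e) : ∃ p, p ∈ y ∧ G.le e' p.ev := by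
  have hm : e' ∈ insert e (ExEvent.ev '' y) := hcfg.2 e e' h (Set.mem_insert _ _)
  rcases hm with rfl | ⟨p, hp, hpe⟩
  · exact absurd rfl hne
  · exact ⟨p, hp, by rw [hpe]; exact G.le_refl e'⟩

/-- Extension of a configuration of the expansion by a fresh event with a
given instantiation of its top. -/
noncomputable def extend (hcfg : G.toPreES.Config (insert e (ExEvent.ev '' y)))
    (hsa : sortA a = sortV (var e)) : ExEvent G.toPreES var sortA sortV where
  ev := e
  inst := fun e' =>
    if h : G.le e' e ∧ e' ≠ e then (extend_wit hcfg h.1 h.2).choose.inst e'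
    else if e' = e then some a else none
  dom := fun e' => by
    by_cases h : G.le e' e ∧ e' ≠ e
    · have hs : ((extend_wit hcfg h.1 h.2).choose.inst e').isSome :=
        ((extend_wit hcfg h.1 h.2).choose.dom e').mpr (extend_wit hcfg h.1 h.2).choose_spec.2
      simp only [dif_pos h]
      simp [hs, h.1]
    · by_cases he : e' = e
      · subst he
        simp only [dif_neg h, if_pos rfl]
        simp [G.le_refl e']
      · have hnle : ¬ G.le e' e := fun hl => h ⟨hl, he⟩
        simp [dif_neg h, if_neg he, hnle]
  srt := fun e' a' ha' => by
    by_cases h : G.le e' e ∧ e' ≠ e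
    · simp only [dif_pos h] at ha'
      exact (extend_wit hcfg h.1 h.2).choose.srt e' a' ha'
    · by_cases he : e' = e
      · simp only [dif_neg h, if_pos he] at ha'
        subst he
        rw [← Option.some_inj.mp ha'.symm] at hsa
        exact hsa
      · simp only [dif_neg h, if_neg he] at ha'
        exact nomatch ha'

@[simp] theorem extend_ev (hcfg : G.toPreES.Config (insert e (ExEvent.ev '' y)))
    (hsa : sortA a = sortV (var e)) : (extend hcfg hsa).ev = e := rfl

theorem extend_inst_mem (hcfg : G.toPreES.Config (insert e (ExEvent.ev '' y)))
    (hsa : sortA a = sortV (var e))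
    (hy : (expn G.toPreES var sortA sortV).Config y)
    {e'} (h : G.le e' e) (hne : e' ≠ e) {p} (hp : p ∈ y) (hple : G.le e' p.ev) :
    (extend hcfg hsa).inst e' = p.inst e' := by
  show (if _ : _ then _ else _) = _
  rw [dif_pos ⟨h, hne⟩]
  exact config_coh hy (extend_wit hcfg h hne).choose_spec.1 hp
    (extend_wit hcfg h hne).choose_spec.2 hple

theorem extend_inst_top (hcfg : G.toPreES.Config (insert e (ExEvent.ev '' y)))
    (hsa : sortA a = sortV (var e)) : (extend hcfg hsa).inst e = some a := by
  show (if _ : _ then _ else _) = _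
  rw [dif_neg (by simp), if_pos rfl]

theorem extend_Inst (hcfg : G.toPreES.Config (insert e (ExEvent.ev '' y)))
    (hsa : sortA a = sortV (var e)) : (extend hcfg hsa).Inst G.le_refl = a := by
  have h := inst_ev_eq (extend hcfg hsa)
  rw [extend_ev, extend_inst_top] at h
  exact (Option.some_inj.mp h).symm

theorem extend_enabled (hcfg : G.toPreES.Config (insert e (ExEvent.ev '' y)))
    (hsa : sortA a = sortV (var e))
    (hy : (expn G.toPreES var sortA sortV).Config y)
    (hnot : e ∉ ExEvent.ev '' y) :
    (expn G.toPreES var sortA sortV).Enabled y (extend hcfg hsa) := by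
  constructor
  · intro hmem
    exact hnot ⟨extend hcfg hsa, hmem, rfl⟩
  · apply config_of
    · rw [Set.image_insert_eq, extend_ev]
      exact hcfg
    · rintro p (rfl | hp) q (rfl | hq) hev
      · rfl
      · exact absurd (⟨q, hq, hev.symm⟩ : e ∈ ExEvent.ev '' y) hnot
      · exact absurd (⟨p, hp, hev⟩ : e ∈ ExEvent.ev '' y) hnot
      · exact config_pair hy hp hq hev
    · rintro p r hle (rfl | hp)
      · -- r below the new event
        by_cases hre : r.ev = e
        · exact Set.mem_insert_iff.mpr (Or.inl (le_ev_eq hle hre))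
        · have hrle : G.le r.ev e := hle.1
          obtain ⟨p₀, hp₀, hp₀le⟩ := extend_wit hcfg hrle hre
          right
          have hkey : r = restrict p₀ r.ev hp₀le := by
            apply exEvent_ext' (restrict_ev p₀ r.ev hp₀le).symm
            intro e'' he''
            have h1 : r.inst e'' = (extend hcfg hsa).inst e'' := (hle.2 e'' he'').symm
            have hne'' : e'' ≠ e := by
              intro heq; subst heq
              exact hre (G.le_antisymm _ _ hrle he'')
            rw [h1, extend_inst_mem hcfg hsa hy (G.le_trans _ _ _ he'' hrle) hne'' hp₀
                (G.le_trans _ _ _ he'' hp₀le), restrict_inst p₀ r.ev hp₀le he'']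
          rw [hkey]
          exact hy.2 p₀ _ (restrict_le p₀ r.ev hp₀le) hp₀
      · exact Set.mem_insert_of_mem _ (hy.2 p r hle hp)

end Extend


end AExp

open AExp

/-- `𝓐`-strategies `σ, inst : S → E` on an `𝓐`-game `E` are in
bijective correspondence with ordinary strategies `σ' : S → expn(E)`:
each strategy `σ'` on the expansion induces the `𝓐`-strategy
`(red ∘ σ', Inst ∘ σ')`, and conversely every `𝓐`-strategy arises this way
from a unique strategy on the expansion. -/
theorem aStrategy_expansion_bijection {SE E A V Srt : Type}
    (SS : ES SE) (G : ES E) (polS : SE → Bool) (polG : E → Bool)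
    (var : E → V) (sortA : A → Srt) (sortV : V → Srt)
    (hrf : RaceFree G.toPreES polG) (hno : NoOverlap G.toPreES var) :
    (∀ σ' : SE → ExEvent G.toPreES var sortA sortV,
      IsStrategy SS.toPreES (expn G.toPreES var sortA sortV) polS
        (fun p => polG p.ev) σ' →
      IsAStrategy SS.toPreES G.toPreES polS polG var sortA sortV
        (fun s => (σ' s).ev) (fun s => (σ' s).Inst G.le_refl)) ∧
    (∀ (σ : SE → E) (inst : SE → A),
      IsAStrategy SS.toPreES G.toPreES polS polG var sortA sortV σ inst →
      ∃! σ' : SE → ExEvent G.toPreES var sortA sortV,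
        IsStrategy SS.toPreES (expn G.toPreES var sortA sortV) polS
          (fun p => polG p.ev) σ' ∧
        (∀ s, (σ' s).ev = σ s) ∧
        (∀ s, (σ' s).Inst G.le_refl = inst s)) := by
  clear hrf hno
  constructor
  · -- Part 1: a strategy on the expansion induces an `𝓐`-strategy.
    rintro σ' ⟨⟨hmapc, hmapi⟩, hpol, hrecep, hinn⟩
    refine ⟨⟨?_, ?_⟩, hpol, ?_, ?_, ?_⟩
    · -- configurations map to configurations
      intro x hx
      have h1 := config_ev_image (hmapc x hx)
      rwa [Set.image_image] at h1
    · -- local injectivity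
      intro x hx s₁ h₁ s₂ h₂ hev
      exact hmapi x hx s₁ h₁ s₂ h₂
        (config_pair (hmapc x hx) ⟨s₁, h₁, rfl⟩ ⟨s₂, h₂, rfl⟩ hev)
    · -- matching sorts
      intro s
      exact (σ' s).srt (σ' s).ev _ (inst_ev_eq (σ' s))
    · -- receptivity
      intro x hx e hneg hen a hsa
      have hy := hmapc x hx
      have himg : (fun s => (σ' s).ev) '' x = ExEvent.ev '' (σ' '' x) :=
        (Set.image_image _ _ _).symm
      rw [himg] at hen
      have hqen := extend_enabled hen.2 hsa hy hen.1
      obtain ⟨s, ⟨hsen, hsq⟩, huniq⟩ :=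
        hrecep x hx (extend hen.2 hsa) hneg hqen
      refine ⟨s, ⟨hsen, ?_, ?_⟩, ?_⟩
      · exact congrArg ExEvent.ev hsq
      · show (σ' s).Inst G.le_refl = a
        rw [hsq]; exact extend_Inst hen.2 hsa
      · rintro t ⟨hten, htev, hta⟩
        replace htev : (σ' t).ev = e := htev
        replace hta : (σ' t).Inst G.le_refl = a := hta
        apply huniq
        refine ⟨hten, ?_⟩
        have hz : (expn G.toPreES var sortA sortV).Config (insert (σ' t) (σ' '' x)) := by
          have h := hmapc _ hten.2
          rwa [Set.image_insert_eq] at h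
        apply exEvent_ext' (show (σ' t).ev = (extend hen.2 hsa).ev from htev)
        intro e' he'
        by_cases hee : e' = e
        · subst hee
          have h1 := inst_ev_eq (σ' t)
          rw [htev] at h1
          rw [h1, hta, extend_inst_top]
        · have hle : G.le e' e := by rw [← htev]; exact he'
          have hmem : restrict (σ' t) e' he' ∈ insert (σ' t) (σ' '' x) :=
            hz.2 (σ' t) _ (restrict_le (σ' t) e' he') (Set.mem_insert _ _)
          rcases hmem with hmem | hmem
          · exfalso
            have := congrArg ExEvent.ev hmem
            rw [restrict_ev, htev] at this
            exact hee this
          · rw [← restrict_inst (σ' t) e' he' (G.le_refl e'),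
              extend_inst_mem hen.2 hsa hy hle hee hmem
                (by rw [restrict_ev]; exact G.le_refl e')]
    · -- innocence
      intro s s' him hpl
      have h := hinn s s' him hpl
      refine ⟨?_, h.2.1.1, ?_⟩
      · intro hev
        exact h.1 (le_ev_eq h.2.1 hev)
      · intro d h₁ h₂
        have hr1 : (expn G.toPreES var sortA sortV).le (σ' s) (restrict (σ' s') d h₂) := by
          refine ⟨h₁, fun e'' he'' => ?_⟩
          rw [restrict_inst (σ' s') d h₂ (G.le_trans _ _ _ he'' h₁)]
          exact h.2.1.2 e'' he''
        rcases h.2.2 _ hr1 (restrict_le (σ' s') d h₂) with hc | hc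
        · exact Or.inl (congrArg ExEvent.ev hc)
        · exact Or.inr (congrArg ExEvent.ev hc)
  · -- Part 2: every `𝓐`-strategy arises from a unique strategy on the expansion.
    rintro σ inst ⟨hmap, hpol, hsort, hrecep, hinn⟩
    have hmapθ : PreES.IsMap SS.toPreES (expn G.toPreES var sortA sortV)
        (theta SS σ inst hmap hsort) := by
      constructor
      · intro x hx
        apply config_of
        · have h1 := hmap.1 x hx
          rwa [Set.image_image, theta_comp_ev SS σ inst hmap hsort]
        · rintro _ ⟨s₁, h₁, rfl⟩ _ ⟨s₂, h₂, rfl⟩ hev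
          exact congrArg _ (hmap.2 x hx s₁ h₁ s₂ h₂ hev)
        · rintro _ r hle ⟨s, hs, rfl⟩
          obtain ⟨s', hs'le, _, rfl⟩ := theta_downcl SS σ inst hmap hsort s r hle
          exact ⟨s', hx.2 s s' hs'le hs, rfl⟩
      · rintro x hx s₁ h₁ s₂ h₂ hev
        exact hmap.2 x hx s₁ h₁ s₂ h₂ (congrArg ExEvent.ev hev)
    refine ⟨theta SS σ inst hmap hsort, ⟨⟨hmapθ, fun s => hpol s, ?_, ?_⟩,
      fun s => rfl, theta_Inst SS σ inst hmap hsort⟩, ?_⟩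
    · -- receptivity on the expansion
      intro x hx q hqneg hqen
      have hyc := hmapθ.1 x hx
      have hqcfg := hqen.2
      have himg : ExEvent.ev '' (theta SS σ inst hmap hsort '' x) = σ '' x := by
        rw [Set.image_image, theta_comp_ev SS σ inst hmap hsort]
      have hevc := config_ev_image hqcfg
      rw [Set.image_insert_eq, himg] at hevc
      have hnot : q.ev ∉ σ '' x := by
        rintro ⟨s, hs, hev⟩
        have : theta SS σ inst hmap hsort s = q :=
          config_pair hqcfg (Set.mem_insert_of_mem _ ⟨s, hs, rfl⟩) (Set.mem_insert _ _) hev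
        exact hqen.1 (this ▸ Set.mem_image_of_mem _ hs)
      have hsa : sortA (q.Inst G.le_refl) = sortV (var q.ev) :=
        q.srt q.ev _ (inst_ev_eq q)
      obtain ⟨s, ⟨hsen, hsev, hsinst⟩, huniq⟩ :=
        hrecep x hx q.ev hqneg ⟨hnot, hevc⟩ (q.Inst G.le_refl) hsa
      have hkey : theta SS σ inst hmap hsort s = q := by
        apply exEvent_ext' (show (theta SS σ inst hmap hsort s).ev = q.ev from hsev)
        intro e' he'
        by_cases hq : e' = q.ev
        · subst hq
          rw [theta_inst SS σ inst hmap hsort s he' (SS.le_refl s) hsev,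
            inst_ev_eq q, hsinst]
        · have heq : G.le e' q.ev := by rw [← hsev]; exact he'
          have hmem : restrict q e' heq ∈ insert q (theta SS σ inst hmap hsort '' x) :=
            hqcfg.2 q _ (restrict_le q e' heq) (Set.mem_insert _ _)
          rcases hmem with hmem | hmem
          · exfalso
            exact hq (congrArg ExEvent.ev hmem)
          · obtain ⟨s₀, hs₀, hr⟩ := hmem
            have hs₀ev : σ s₀ = e' := congrArg ExEvent.ev hr
            obtain ⟨s', hs'le, hs'ev⟩ := (local_wit SS σ hmap s he').exists
            have hs'mem : s' ∈ insert s x := hsen.2.2 s s' hs'le (Set.mem_insert _ _)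
            have he₀ : G.le e' (σ s₀) := by rw [hs₀ev]; exact G.le_refl e'
            have hss : s' = s₀ := hmap.2 _ hsen.2 s' hs'mem s₀
              (Set.mem_insert_of_mem _ hs₀) (hs'ev.trans hs₀ev.symm)
            rw [theta_inst SS σ inst hmap hsort s he' hs'le hs'ev, hss,
              ← theta_inst SS σ inst hmap hsort s₀ he₀ (SS.le_refl s₀) hs₀ev,
              hr, restrict_inst q e' heq (G.le_refl e')]
      refine ⟨s, ⟨hsen, hkey⟩, ?_⟩
      rintro t ⟨hten, htq⟩
      refine huniq t ⟨hten, ?_, ?_⟩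
      · exact congrArg ExEvent.ev htq
      · rw [← htq, theta_Inst]
    · -- innocence on the expansion
      intro s s' him hpl
      have hG := hinn s s' him hpl
      refine ⟨?_, ⟨hG.2.1, ?_⟩, ?_⟩
      · intro h
        exact hG.1 (congrArg ExEvent.ev h)
      · intro e'' he''
        obtain ⟨u, hule, huev⟩ := (local_wit SS σ hmap s he'').exists
        rw [theta_inst SS σ inst hmap hsort s he'' hule huev,
          theta_inst SS σ inst hmap hsort s' (G.le_trans _ _ _ he'' hG.2.1)
            (SS.le_trans _ _ _ hule him.2.1) huev]
      · intro d h₁ h₂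
        obtain ⟨s₀, hs₀le, hs₀ev, rfl⟩ := theta_downcl SS σ inst hmap hsort s' d h₂
        rcases hG.2.2 _ h₁.1 h₂.1 with hc | hc
        · exact Or.inl (le_ev_eq h₁ hc.symm).symm
        · exact Or.inr (le_ev_eq h₂ hc)
    · -- uniqueness
      rintro τ ⟨hτstrat, hτev, hτInst⟩
      funext s
      have hcfg := downcl_config SS s
      have hzc := hτstrat.1.1 _ hcfg
      apply exEvent_ext' (show (τ s).ev = (theta SS σ inst hmap hsort s).ev from hτev s)
      intro e' he'
      have he's : G.le e' (σ s) := by rw [← hτev s]; exact he'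
      have hmem : restrict (τ s) e' he' ∈ τ '' {t | SS.le t s} :=
        hzc.2 (τ s) _ (restrict_le (τ s) e' he') ⟨s, SS.le_refl s, rfl⟩
      obtain ⟨s₀, hs₀, hr⟩ := hmem
      have hev₀ : σ s₀ = e' := by rw [← hτev s₀, hr, restrict_ev]
      have h1 : (τ s).inst e' = (τ s₀).inst e' := by
        rw [hr, restrict_inst (τ s) e' he' (G.le_refl e')]
      have h2 : (τ s₀).inst e' = some (inst s₀) := by
        have h := inst_ev_eq (τ s₀)
        rw [hτev s₀, hev₀, hτInst s₀] at h
        exact h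
      rw [h1, h2, theta_inst SS σ inst hmap hsort s he's hs₀ hev₀]
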